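/- Let G = (V,E) be a finite undirected multigraph, A, B ⊆ V², S ⊆ E, and e ∈ E \ S, and let 𝒱 = Four_{G,S}(A,B)/cyc be the set of (A,B)-valid cycle classes with solid edge set S. Then every 𝒱-block is e-adjacent to at most one other 𝒱-block; consequently, in the graph on 𝒱 whose edges join e-adjacent classes, every e-acyclic class has degree at most 1 and every e-cyclic class has degree at most 2. -/

import Mathlib

namespace SubgraphsVsOrientations

/-- The four possible configurations of an edge in a fourientation:
`zero` = 0-way, `forward`/`backward` = the two 1-way configurations (relative to
a reference direction of the edge), `two` = 2-way. -/
inductive Four : Type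
  | zero | forward | backward | two
deriving DecidableEq

instance instFintypeFour : Fintype Four :=
  ⟨{Four.zero, Four.forward, Four.backward, Four.two}, fun x => by cases x <;> simp⟩

variable {V E : Type*}

/-- Whether configuration `c` allows traversal of the edge in direction `b`
(`b = true` means from `src` to `tgt`). -/
def allows : Four → Bool → Prop
  | Four.zero, _ => False
  | Four.forward, b => b = true
  | Four.backward, b => b = false
  | Four.two, _ => True

/-- An edge configuration is solid if it is 0-way or 2-way. -/
def IsSolid (c : Four) : Prop := c = Four.zero ∨ c = Four.two

/-- A configuration is 1-way if it is `forward` or `backward`. -/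
def IsOneWay (c : Four) : Prop := c = Four.forward ∨ c = Four.backward

/-- Reversing a configuration: swaps the two 1-way configurations,
fixes 0-way and 2-way. -/
def flipFour : Four → Four
  | Four.forward => Four.backward
  | Four.backward => Four.forward
  | c => c

/-- The 1-way configuration corresponding to direction `b`. -/
def oneWayFour (b : Bool) : Four := if b then Four.forward else Four.backward

/-- Tail of the arc `(e, b)` (the edge `e` traversed in direction `b`). -/
def arcTail (src tgt : E → V) (a : E × Bool) : V := if a.2 then src a.1 else tgt a.1

/-- Head of the arc `(e, b)`. -/
def arcHead (src tgt : E → V) (a : E × Bool) : V := if a.2 then tgt a.1 else src a.1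

/-- One-step relation of the digraph `G⃗(A,B;φ)`: there is an arc from `x` to `y`, either
a traversable directed edge of the fourientation `φ`, or an extra arc from `A ∪ B`. -/
def arcStep (src tgt : E → V) (A B : Set (V × V)) (φ : E → Four) (x y : V) : Prop :=
  (∃ a : E × Bool, allows (φ a.1) a.2 ∧ arcTail src tgt a = x ∧ arcHead src tgt a = y)
    ∨ (x, y) ∈ A ∪ B

/-- Reachability by a directed path in the digraph `G⃗(A,B;φ)`. -/
def reach (src tgt : E → V) (A B : Set (V × V)) (φ : E → Four) : V → V → Prop :=
  Relation.ReflTransGen (arcStep src tgt A B φ)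

/-- A fourientation `φ` is `(A,B)`-valid: in `G⃗(A,B;φ)`, for every `(u,v) ∈ A` the vertex `v`
cannot reach `u`, and for every `(u,v) ∈ B` the vertex `v` can reach `u`. -/
def IsValid (src tgt : E → V) (A B : Set (V × V)) (φ : E → Four) : Prop :=
  (∀ p ∈ A, ¬ reach src tgt A B φ p.2 p.1) ∧ (∀ p ∈ B, reach src tgt A B φ p.2 p.1)

/-- The set of solid edges of a fourientation. -/
def solidSet (φ : E → Four) : Set E := {e | IsSolid (φ e)}

/-- The fourientation associated to an orientation `σ : E → Bool` (every edge 1-way). -/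
def toFour (σ : E → Bool) : E → Four := fun e => oneWayFour (σ e)

open Classical in
/-- The fourientation associated to a (spanning) subgraph `F ⊆ E`: edges of `F` are 2-way,
the other edges are 0-way. -/
noncomputable def toFourSub (F : Set E) : E → Four :=
  fun e => if e ∈ F then Four.two else Four.zero

/-- The arc `(e,b)` is the arc of a 1-way edge of `φ`. -/
def oneWayArc (φ : E → Four) (a : E × Bool) : Prop := φ a.1 = oneWayFour a.2

/-- `Cyc(φ)`: the set of cyclic 1-way edges (arcs) of the fourientation `φ`, in the digraph
`G⃗(A,B;φ)`: the head of the arc can reach its tail. -/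
def CycSet (src tgt : E → V) (A B : Set (V × V)) (φ : E → Four) : Set (E × Bool) :=
  {a | oneWayArc φ a ∧ reach src tgt A B φ (arcHead src tgt a) (arcTail src tgt a)}

/-- `Acy(φ)`: the set of acyclic 1-way edges (arcs) of the fourientation `φ`. -/
def AcySet (src tgt : E → V) (A B : Set (V × V)) (φ : E → Four) : Set (E × Bool) :=
  {a | oneWayArc φ a ∧ ¬ reach src tgt A B φ (arcHead src tgt a) (arcTail src tgt a)}

/-- `l` is (the arc sequence of) a directed cycle: a nonempty closed chain of arcs
visiting no vertex twice. -/
def IsDirCycle (src tgt : E → V) (l : List (E × Bool)) : Prop :=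
  ∃ h : l ≠ [],
    l.Chain' (fun a b => arcHead src tgt a = arcTail src tgt b) ∧
    arcHead src tgt (l.getLast h) = arcTail src tgt (l.head h) ∧
    (l.map (arcTail src tgt)).Nodup

/-- Reversing the directed cycle `l` in the fourientation `φ`: all 1-way edges on the cycle are
reversed, other edges (in particular 2-way edges of the cycle) are unchanged. -/
def revCyc [DecidableEq E] (φ : E → Four) (l : List (E × Bool)) : E → Four :=
  fun e => if (e, true) ∈ l ∨ (e, false) ∈ l then flipFour (φ e) else φ e

/-- One cycle-reversal move: `ψ` is obtained from `φ` by reversing a directed cycle of `φ`. -/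
def CycleStep (src tgt : E → V) [DecidableEq E] (φ ψ : E → Four) : Prop :=
  ∃ l, IsDirCycle src tgt l ∧ (∀ a ∈ l, allows (φ a.1) a.2) ∧ ψ = revCyc φ l

/-- The edge `e` crosses the cut given by `V1` (in either direction). -/
def edgeCrosses (src tgt : E → V) (V1 : Set V) (e : E) : Prop :=
  (src e ∈ V1 ∧ tgt e ∉ V1) ∨ (tgt e ∈ V1 ∧ src e ∉ V1)

/-- The cut `V1 / V1ᶜ` defines a directed `(A,B)`-cocycle of `G⃗(A,B;φ)`: the set of arcs from
`V1` to `V1ᶜ` is nonempty, no arc of the digraph goes from `V1ᶜ` to `V1`, and no arc of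
`A ∪ B` crosses the cut (in either direction). -/
def IsABCocycleCut (src tgt : E → V) (A B : Set (V × V)) (φ : E → Four) (V1 : Set V) : Prop :=
  (∃ a : E × Bool, allows (φ a.1) a.2 ∧ arcTail src tgt a ∈ V1 ∧ arcHead src tgt a ∉ V1) ∧
  (∀ a : E × Bool, allows (φ a.1) a.2 → ¬ (arcTail src tgt a ∉ V1 ∧ arcHead src tgt a ∈ V1)) ∧
  (∀ p ∈ A ∪ B, ((p : V × V).1 ∈ V1 ↔ p.2 ∈ V1))

open Classical in
/-- Reversing the directed cocycle given by the cut `V1`: all 1-way edges crossing the cut are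
reversed, other edges (in particular 0-way edges crossing the cut) are unchanged. -/
noncomputable def revCut (src tgt : E → V) (φ : E → Four) (V1 : Set V) : E → Four :=
  fun e => if edgeCrosses src tgt V1 e then flipFour (φ e) else φ e

/-- One cocycle-reversal move: `ψ` is obtained from `φ` by reversing a directed
`(A,B)`-cocycle of `φ`. -/
def CocycleStep (src tgt : E → V) (A B : Set (V × V)) (φ ψ : E → Four) : Prop :=
  ∃ V1 : Set V, IsABCocycleCut src tgt A B φ V1 ∧ ψ = revCut src tgt φ V1

/-- One cycle- or cocycle-reversal move. -/
def CCStep (src tgt : E → V) (A B : Set (V × V)) [DecidableEq E] (φ ψ : E → Four) : Prop :=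
  CycleStep src tgt φ ψ ∨ CocycleStep src tgt A B φ ψ

/-- `φ` contains no cycle (of the graph `G`) made entirely of 2-way edges. -/
def NoTwoWayCycle (src tgt : E → V) (φ : E → Four) : Prop :=
  ¬ ∃ l : List (E × Bool), IsDirCycle src tgt l ∧ (l.map Prod.fst).Nodup ∧
      ∀ a ∈ l, φ a.1 = Four.two

/-- `φ` contains no `(A,B)`-cocycle (of the graph `G`) made entirely of 0-way edges:
there is no cut, not crossed by any arc of `A ∪ B`, crossed by at least one edge of `G`,
all of whose crossing edges are 0-way. -/
def NoZeroWayCocycle (src tgt : E → V) (A B : Set (V × V)) (φ : E → Four) : Prop :=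
  ¬ ∃ V1 : Set V, (∃ e, edgeCrosses src tgt V1 e) ∧
      (∀ e, edgeCrosses src tgt V1 e → φ e = Four.zero) ∧
      (∀ p ∈ A ∪ B, ((p : V × V).1 ∈ V1 ↔ p.2 ∈ V1))

/-- The subgraph `F` contains no cycle (it is a forest). -/
def NoCycleIn (src tgt : E → V) (F : Set E) : Prop :=
  ¬ ∃ l : List (E × Bool), IsDirCycle src tgt l ∧ (l.map Prod.fst).Nodup ∧ ∀ a ∈ l, a.1 ∈ F

/-- One undirected adjacency step in the graph `F ∪ A̲ ∪ B̲`. -/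
def usym (src tgt : E → V) (A B : Set (V × V)) (F : Set E) (x y : V) : Prop :=
  (∃ e ∈ F, (src e = x ∧ tgt e = y) ∨ (src e = y ∧ tgt e = x)) ∨
  (∃ p ∈ A ∪ B, ((p : V × V) = (x, y) ∨ p = (y, x)))

/-- Connectivity (by undirected paths) in the graph `F ∪ A̲ ∪ B̲`. -/
def ureach (src tgt : E → V) (A B : Set (V × V)) (F : Set E) : V → V → Prop :=
  Relation.ReflTransGen (usym src tgt A B F)

/-- The subgraph `F` is `(A,B)`-connected: the connected components of `F ∪ A̲ ∪ B̲`
coincide with those of `G ∪ A̲ ∪ B̲`. -/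
def ABConnected (src tgt : E → V) (A B : Set (V × V)) (F : Set E) : Prop :=
  ∀ x y, ureach src tgt A B F x y ↔ ureach src tgt A B Set.univ x y


/-- Membership in `𝒱`: `φ` is `(A,B)`-valid, has solid edge set `S`, and its class contains no
cycle made entirely of 2-way edges. -/
def InVclass (src tgt : E → V) (A B : Set (V × V)) (S : Set E) [DecidableEq E]
    (φ : E → Four) : Prop :=
  IsValid src tgt A B φ ∧ solidSet φ = S ∧ NoTwoWayCycle src tgt φ

/-- The cycle equivalence class of `φ` (for the equivalence generated by cycle reversals). -/
def cycCls (src tgt : E → V) [DecidableEq E] (φ : E → Four) : Set (E → Four) :=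
  {ψ | Relation.EqvGen (CycleStep src tgt) φ ψ}

/-- `C` is a class of `𝒱` (viewed as a set of fourientations). -/
def IsVClass (src tgt : E → V) (A B : Set (V × V)) (S : Set E) [DecidableEq E]
    (C : Set (E → Four)) : Prop :=
  ∃ φ, InVclass src tgt A B S φ ∧ C = cycCls src tgt φ

/-- `X` is a `𝒱`-block: a nonempty set of the form `φ̄_{→e}` or `φ̄_{←e}` for a class
`φ̄` of `𝒱`. -/
def IsVBlock (src tgt : E → V) (A B : Set (V × V)) (S : Set E) (e : E) [DecidableEq E]
    (X : Set (E → Four)) : Prop :=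
  ∃ φ b, InVclass src tgt A B S φ ∧
    X = {ψ ∈ cycCls src tgt φ | ψ e = oneWayFour b} ∧ X.Nonempty

/-- Two sets of fourientations are `e`-adjacent if they contain fourientations which coincide
except that they have opposite orientations of `e`. -/
def EAdj (e : E) [DecidableEq E] (X Y : Set (E → Four)) : Prop :=
  ∃ ψ ∈ X, Function.update ψ e (flipFour (ψ e)) ∈ Y

/-- The edge `e` (1-way in `ψ`) is cyclic in `G⃗(A,B;ψ)`. -/
def ECyclicIn (src tgt : E → V) (A B : Set (V × V)) (e : E) (ψ : E → Four) : Prop :=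
  (ψ e = Four.forward ∧ reach src tgt A B ψ (tgt e) (src e)) ∨
  (ψ e = Four.backward ∧ reach src tgt A B ψ (src e) (tgt e))

/-- The edge `e` (1-way in `ψ`) is acyclic in `G⃗(A,B;ψ)`. -/
def EAcyclicIn (src tgt : E → V) (A B : Set (V × V)) (e : E) (ψ : E → Four) : Prop :=
  (ψ e = Four.forward ∧ ¬ reach src tgt A B ψ (tgt e) (src e)) ∨
  (ψ e = Four.backward ∧ ¬ reach src tgt A B ψ (src e) (tgt e))

section Aux

open Classical

variable [DecidableEq E] (src tgt : E → V)

/-- Flip edge `e` in a fourientation. -/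
noncomputable def flipE (e : E) (χ : E → Four) : E → Four :=
  Function.update χ e (flipFour (χ e))

noncomputable def ind (p : Prop) : ℤ := if p then 1 else 0

/-- Integer vector of a list of arcs. -/
def cvec (l : List (E × Bool)) (f : E) : ℤ :=
  (l.count (f, true) : ℤ) - (l.count (f, false) : ℤ)

/-- Divergence of an integer edge vector at a vertex. -/
noncomputable def divg [Fintype E] (c : E → ℤ) (v : V) : ℤ :=
  ∑ f, c f * (ind (tgt f = v) - ind (src f = v))

/-- Flip the 1-way edges in the support of `c`. -/
noncomputable def applyFlip (c : E → ℤ) (χ : E → Four) : E → Four :=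
  fun f => if c f = 0 then χ f else flipFour (χ f)

/-- Compatibility of an integer vector with a fourientation. -/
def Compat (c : E → ℤ) (χ : E → Four) : Prop :=
  ∀ f, (χ f = Four.zero → c f = 0) ∧ (χ f = Four.forward → 0 ≤ c f ∧ c f ≤ 1) ∧
    (χ f = Four.backward → -1 ≤ c f ∧ c f ≤ 0)

/-- A cycle step avoiding the edge `e`. -/
def EStep (e : E) (χ ψ : E → Four) : Prop :=
  ∃ l, IsDirCycle src tgt l ∧ (∀ a ∈ l, allows (χ a.1) a.2) ∧ (∀ a ∈ l, a.1 ≠ e) ∧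
    ψ = revCyc χ l

lemma flipFour_flipFour (c : Four) : flipFour (flipFour c) = c := by cases c <;> rfl

lemma flipFour_two_iff {c : Four} : flipFour c = Four.two ↔ c = Four.two := by
  cases c <;> simp [flipFour]

section VE
variable [Fintype V] [Fintype E]

lemma divg_sub (c d : E → ℤ) (v : V) :
    divg src tgt (fun f => c f - d f) v = divg src tgt c v - divg src tgt d v := by
  simp [divg, sub_mul, Finset.sum_sub_distrib]

lemma divg_neg (c : E → ℤ) (v : V) :
    divg src tgt (fun f => -(c f)) v = -divg src tgt c v := by
  simp [divg, Finset.sum_neg_distrib]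

lemma divg_add (c d : E → ℤ) (v : V) :
    divg src tgt (fun f => c f + d f) v = divg src tgt c v + divg src tgt d v := by
  simp [divg, add_mul, Finset.sum_add_distrib]

end VE

end Aux
section Aux2
set_option linter.unusedSectionVars false
open Classical
variable [DecidableEq E] (src tgt : E → V)

lemma IsDirCycle.nodup {l : List (E × Bool)} (h : IsDirCycle src tgt l) : l.Nodup := by
  obtain ⟨hne, hc, hcl, hnd⟩ := h
  exact List.Nodup.of_map _ hnd

/-- Integer vector of a list of arcs (recursive form). -/
def cvec' : List (E × Bool) → E → ℤ
  | [], _ => 0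
  | a :: l, f => cvec' l f + (if a = (f, true) then 1 else 0) - (if a = (f, false) then 1 else 0)

lemma cvec'_of_not_mem {l : List (E × Bool)} {f : E}
    (h1 : (f, true) ∉ l) (h2 : (f, false) ∉ l) : cvec' l f = 0 := by
  induction l with
  | nil => rfl
  | cons a t ih =>
      simp only [List.mem_cons, not_or] at h1 h2
      rw [cvec', ih h1.2 h2.2, if_neg (fun h => h1.1 h.symm), if_neg (fun h => h2.1 h.symm)]
      ring

lemma cvec'_forward {l : List (E × Bool)} {f : E} (hnd : l.Nodup) (h2 : (f, false) ∉ l) :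
    cvec' l f = if (f, true) ∈ l then 1 else 0 := by
  induction l with
  | nil => rfl
  | cons a t ih =>
      simp only [List.mem_cons, not_or] at h2
      rw [cvec']
      by_cases ha : a = (f, true)
      · subst ha
        rw [cvec'_of_not_mem (List.nodup_cons.mp hnd).1 h2.2]
        simp [h2.1]
      · have hfa : ¬ a = (f, false) := fun h => h2.1 h.symm
        rw [if_neg ha, if_neg hfa, ih (List.nodup_cons.mp hnd).2 h2.2]
        have hmem : ((f, true) ∈ a :: t) ↔ ((f, true) ∈ t) := by
          constructor
          · intro h
            rcases List.mem_cons.mp h with h | h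
            · exact absurd h.symm ha
            · exact h
          · exact fun h => List.mem_cons_of_mem _ h
        rw [if_congr hmem rfl rfl]; ring

lemma cvec'_backward {l : List (E × Bool)} {f : E} (hnd : l.Nodup) (h2 : (f, true) ∉ l) :
    cvec' l f = if (f, false) ∈ l then -1 else 0 := by
  induction l with
  | nil => rfl
  | cons a t ih =>
      simp only [List.mem_cons, not_or] at h2
      rw [cvec']
      by_cases ha : a = (f, false)
      · subst ha
        rw [cvec'_of_not_mem h2.2 (List.nodup_cons.mp hnd).1]
        simp [h2.1]
      · have hfa : ¬ a = (f, true) := fun h => h2.1 h.symm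
        rw [if_neg hfa, if_neg ha, ih (List.nodup_cons.mp hnd).2 h2.2]
        have hmem : ((f, false) ∈ a :: t) ↔ ((f, false) ∈ t) := by
          constructor
          · intro h
            rcases List.mem_cons.mp h with h | h
            · exact absurd h.symm ha
            · exact h
          · exact fun h => List.mem_cons_of_mem _ h
        rw [if_congr hmem rfl rfl]; ring

/-- Telescoping sum along a head-tail chain. -/
lemma sum_inc_chain (v : V) :
    ∀ (l : List (E × Bool)) (a z : E × Bool),
      l.Chain' (fun a b => arcHead src tgt a = arcTail src tgt b) →
      l.head? = some a → l.getLast? = some z →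
      (l.map (fun b => ind (arcHead src tgt b = v) - ind (arcTail src tgt b = v))).sum
        = ind (arcHead src tgt z = v) - ind (arcTail src tgt a = v)
  | [], a, z => by intro _ h; simp at h
  | [b], a, z => by
      intro _ ha hz
      simp at ha hz
      subst ha; subst hz; simp
  | b :: c :: t, a, z => by
      intro hc ha hz
      have hbc := (List.isChain_cons_cons.mp hc).1
      have ht := (List.isChain_cons_cons.mp hc).2
      have ha' : b = a := by simpa using ha
      have hz' : (c :: t).getLast? = some z := by
        simpa [List.getLast?_cons_cons] using hz
      have IH := sum_inc_chain v (c :: t) c z ht rfl hz'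
      subst ha'
      simp only [List.map_cons, List.sum_cons] at IH ⊢
      rw [IH]
      have : arcHead src tgt b = arcTail src tgt c := hbc
      rw [this]; ring

/-- The divergence of a cycle vector vanishes. -/
lemma divg_cvec'_aux [Fintype V] [Fintype E] (l : List (E × Bool)) (v : V) :
    divg src tgt (cvec' l) v
      = (l.map (fun b => ind (arcHead src tgt b = v) - ind (arcTail src tgt b = v))).sum := by
  induction l with
  | nil => simp [divg, cvec']
  | cons a t ih =>
      have step : (divg src tgt (cvec' (a :: t)) v) = divg src tgt (cvec' t) v
          + ∑ f, ((if a = (f, true) then (1:ℤ) else 0) - (if a = (f, false) then 1 else 0))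
            * (ind (tgt f = v) - ind (src f = v)) := by
        simp only [divg]
        rw [← Finset.sum_add_distrib]
        refine Finset.sum_congr rfl (fun f _ => ?_)
        rw [cvec']; ring
      rw [step, ih]
      simp only [List.map_cons, List.sum_cons]
      have harc : ∑ f, ((if a = (f, true) then (1:ℤ) else 0) - (if a = (f, false) then 1 else 0))
            * (ind (tgt f = v) - ind (src f = v))
          = ind (arcHead src tgt a = v) - ind (arcTail src tgt a = v) := by
        obtain ⟨g, bb⟩ := a
        cases bb
        · have key : ∀ f : E, ((if ((g, false) : E × Bool) = (f, true) then (1:ℤ) else 0)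
              - (if ((g, false) : E × Bool) = (f, false) then 1 else 0))
                * (ind (tgt f = v) - ind (src f = v))
              = if g = f then -(ind (tgt f = v) - ind (src f = v)) else 0 := by
            intro f; by_cases h : g = f <;> simp [h] <;> ring
          rw [Finset.sum_congr rfl (fun f _ => key f), Finset.sum_ite_eq]
          simp [arcHead, arcTail]
          try ring
        · have key : ∀ f : E, ((if ((g, true) : E × Bool) = (f, true) then (1:ℤ) else 0)
              - (if ((g, true) : E × Bool) = (f, false) then 1 else 0))
                * (ind (tgt f = v) - ind (src f = v))
              = if g = f then (ind (tgt f = v) - ind (src f = v)) else 0 := by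
            intro f; by_cases h : g = f <;> simp [h]
          rw [Finset.sum_congr rfl (fun f _ => key f), Finset.sum_ite_eq]
          simp [arcHead, arcTail]
      rw [harc]; ring

lemma divg_cvec' [Fintype V] [Fintype E] {l : List (E × Bool)} (h : IsDirCycle src tgt l)
    (v : V) : divg src tgt (cvec' l) v = 0 := by
  obtain ⟨hne, hc, hcl, hnd⟩ := h
  rw [divg_cvec'_aux]
  obtain ⟨a, t, rfl⟩ := List.exists_cons_of_ne_nil hne
  rw [sum_inc_chain src tgt v (a :: t) a ((a :: t).getLast (by simp)) hc rfl
    (List.getLast?_eq_getLast (by simp))]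
  have h2 : arcHead src tgt ((a :: t).getLast (by simp)) = arcTail src tgt a := by
    simpa using hcl
  rw [h2]; ring
end Aux2
section Aux3
set_option linter.unusedSectionVars false
open Classical
variable [DecidableEq E] (src tgt : E → V)

lemma not_mem_false_of_forward {χ : E → Four} {l : List (E × Bool)} {f : E}
    (hf : χ f = Four.forward) (htrav : ∀ a ∈ l, allows (χ a.1) a.2) : (f, false) ∉ l := by
  intro h
  have := htrav _ h
  rw [hf] at this
  simp [allows] at this

lemma not_mem_true_of_backward {χ : E → Four} {l : List (E × Bool)} {f : E}
    (hf : χ f = Four.backward) (htrav : ∀ a ∈ l, allows (χ a.1) a.2) : (f, true) ∉ l := by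
  intro h
  have := htrav _ h
  rw [hf] at this
  simp [allows] at this

lemma not_mem_of_zero {χ : E → Four} {l : List (E × Bool)} {f : E}
    (hf : χ f = Four.zero) (htrav : ∀ a ∈ l, allows (χ a.1) a.2) (b : Bool) :
    (f, b) ∉ l := by
  intro h
  have := htrav _ h
  rw [hf] at this
  simp [allows] at this

lemma compat_cvec' {χ : E → Four} {l : List (E × Bool)} (hcyc : IsDirCycle src tgt l)
    (htrav : ∀ a ∈ l, allows (χ a.1) a.2) : Compat (cvec' l) χ := by
  intro f
  refine ⟨fun hf => ?_, fun hf => ?_, fun hf => ?_⟩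
  · exact cvec'_of_not_mem (not_mem_of_zero hf htrav true) (not_mem_of_zero hf htrav false)
  · rw [cvec'_forward (hcyc.nodup src tgt) (not_mem_false_of_forward hf htrav)]
    split <;> omega
  · rw [cvec'_backward (hcyc.nodup src tgt) (not_mem_true_of_backward hf htrav)]
    split <;> omega

lemma revCyc_eq_applyFlip {χ : E → Four} {l : List (E × Bool)} (hcyc : IsDirCycle src tgt l)
    (htrav : ∀ a ∈ l, allows (χ a.1) a.2) : revCyc χ l = applyFlip (cvec' l) χ := by
  funext f
  rcases hf : χ f with _ | _ | _ | _
  · have h1 := not_mem_of_zero hf htrav true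
    have h2 := not_mem_of_zero hf htrav false
    rw [revCyc, applyFlip, if_neg (by tauto), if_pos (cvec'_of_not_mem h1 h2)]
  · have h2 := not_mem_false_of_forward hf htrav
    have hv := cvec'_forward (hcyc.nodup src tgt) h2 (f := f)
    by_cases h1 : (f, true) ∈ l
    · rw [revCyc, applyFlip, if_pos (Or.inl h1), if_neg (by rw [hv, if_pos h1]; omega)]
    · rw [revCyc, applyFlip, if_neg (by tauto), if_pos (by rw [hv, if_neg h1])]
  · have h2 := not_mem_true_of_backward hf htrav
    have hv := cvec'_backward (hcyc.nodup src tgt) h2 (f := f)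
    by_cases h1 : (f, false) ∈ l
    · rw [revCyc, applyFlip, if_pos (Or.inr h1), if_neg (by rw [hv, if_pos h1]; omega)]
    · rw [revCyc, applyFlip, if_neg (by tauto), if_pos (by rw [hv, if_neg h1])]
  · rw [revCyc, applyFlip]
    rw [hf]
    split <;> split <;> simp [flipFour]

lemma compat_symm {c : E → ℤ} {χ : E → Four} (hc : Compat c χ) :
    Compat (fun f => -(c f)) (applyFlip c χ) := by
  intro f
  rcases hf : χ f with _ | _ | _ | _ <;>
    simp only [applyFlip, hf]
  · rw [if_pos ((hc f).1 hf)]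
    refine ⟨fun _ => by rw [(hc f).1 hf]; ring, fun h => by simp at h, fun h => by simp at h⟩
  · have := ((hc f).2.1 hf)
    have h01 : c f = 0 ∨ c f = 1 := by omega
    rcases h01 with h | h <;> rw [h] <;> simp [flipFour] <;> intro h' <;> simp_all
  · have := ((hc f).2.2 hf)
    have h01 : c f = 0 ∨ c f = -1 := by omega
    rcases h01 with h | h <;> rw [h] <;> simp [flipFour] <;> intro h' <;> simp_all
  · split <;> simp [flipFour]

lemma applyFlip_neg {c : E → ℤ} {χ : E → Four} :
    applyFlip (fun f => -(c f)) (applyFlip c χ) = χ := by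
  funext f
  by_cases h : c f = 0 <;> simp [applyFlip, h, flipFour_flipFour]

lemma compat_trans {c1 c2 : E → ℤ} {χ : E → Four} (h1 : Compat c1 χ)
    (h2 : Compat c2 (applyFlip c1 χ)) : Compat (fun f => c1 f + c2 f) χ := by
  intro f
  have H1 := h1 f
  have H2 := h2 f
  rcases hf : χ f with _ | _ | _ | _ <;> rw [hf] at H1 <;>
    simp only [applyFlip, hf] at H2 <;>
    refine ⟨fun h => ?_, fun h => ?_, fun h => ?_⟩ <;> (try simp at h) <;> simp only
  · have e1 := H1.1 rfl
    rw [e1] at H2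
    simp [flipFour] at H2
    omega
  · have e1 := H1.2.1 rfl
    have h01 : c1 f = 0 ∨ c1 f = 1 := by omega
    rcases h01 with h' | h' <;> rw [h'] at H2 <;> simp [flipFour] at H2 <;> omega
  · have e1 := H1.2.2 rfl
    have h01 : c1 f = 0 ∨ c1 f = -1 := by omega
    rcases h01 with h' | h' <;> rw [h'] at H2 <;> simp [flipFour] at H2 <;> omega

lemma applyFlip_trans {c1 c2 : E → ℤ} {χ : E → Four} (h1 : Compat c1 χ)
    (h2 : Compat c2 (applyFlip c1 χ)) :
    applyFlip (fun f => c1 f + c2 f) χ = applyFlip c2 (applyFlip c1 χ) := by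
  funext f
  have H1 := h1 f
  have H2 := h2 f
  rcases hf : χ f with _ | _ | _ | _ <;> rw [hf] at H1
  · have e1 := H1.1 rfl
    have e2 : c2 f = 0 := H2.1 (by simp [applyFlip, hf, e1])
    simp [applyFlip, hf, e1, e2]
  · have e1 := H1.2.1 rfl
    have h01 : c1 f = 0 ∨ c1 f = 1 := by omega
    rcases h01 with h | h
    · have e2 := H2.2.1 (by simp [applyFlip, hf, h])
      have h02 : c2 f = 0 ∨ c2 f = 1 := by omega
      rcases h02 with h' | h' <;> norm_num [applyFlip, hf, h, h', flipFour]
    · have e2 := H2.2.2 (by norm_num [applyFlip, hf, h, flipFour])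
      have h02 : c2 f = 0 ∨ c2 f = -1 := by omega
      rcases h02 with h' | h' <;> norm_num [applyFlip, hf, h, h', flipFour]
  · have e1 := H1.2.2 rfl
    have h01 : c1 f = 0 ∨ c1 f = -1 := by omega
    rcases h01 with h | h
    · have e2 := H2.2.2 (by simp [applyFlip, hf, h])
      have h02 : c2 f = 0 ∨ c2 f = -1 := by omega
      rcases h02 with h' | h' <;> norm_num [applyFlip, hf, h, h', flipFour]
    · have e2 := H2.2.1 (by norm_num [applyFlip, hf, h, flipFour])
      have h02 : c2 f = 0 ∨ c2 f = 1 := by omega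
      rcases h02 with h' | h' <;> norm_num [applyFlip, hf, h, h', flipFour]
  · simp [applyFlip, hf, flipFour]

lemma inv_of_eqvGen [Fintype V] [Fintype E] {χ0 χ1 : E → Four}
    (h : Relation.EqvGen (CycleStep src tgt) χ0 χ1) :
    ∃ c : E → ℤ, (∀ v, divg src tgt c v = 0) ∧ Compat c χ0 ∧ χ1 = applyFlip c χ0 := by
  induction h with
  | rel a b hab =>
      obtain ⟨l, hcyc, htrav, rfl⟩ := hab
      exact ⟨cvec' l, fun v => divg_cvec' src tgt hcyc v, compat_cvec' src tgt hcyc htrav,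
        revCyc_eq_applyFlip src tgt hcyc htrav⟩
  | refl a =>
      refine ⟨fun _ => 0, fun v => by simp [divg], fun f => by simp, ?_⟩
      funext f; simp [applyFlip]
  | symm a b hab ih =>
      obtain ⟨c, hd, hc, rfl⟩ := ih
      exact ⟨fun f => -(c f), fun v => by rw [divg_neg, hd v]; ring, compat_symm hc,
        (applyFlip_neg).symm⟩
  | trans a b c hab hbc ih1 ih2 =>
      obtain ⟨c1, hd1, hc1, rfl⟩ := ih1
      obtain ⟨c2, hd2, hc2, rfl⟩ := ih2
      exact ⟨fun f => c1 f + c2 f, fun v => by rw [divg_add, hd1 v, hd2 v]; ring,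
        compat_trans hc1 hc2, (applyFlip_trans hc1 hc2).symm⟩
end Aux3
section Aux4
set_option linter.unusedSectionVars false
open Classical
variable [DecidableEq E] (src tgt : E → V)

/-- Support arcs of an integer vector. -/
def Supp (c : E → ℤ) (a : E × Bool) : Prop :=
  (a.2 = true ∧ 0 < c a.1) ∨ (a.2 = false ∧ c a.1 < 0)

lemma exists_next [Fintype V] [Fintype E] (c : E → ℤ)
    (hdiv : ∀ v, divg src tgt c v = 0) (a : E × Bool) (ha : Supp c a) :
    ∃ a', Supp c a' ∧ arcTail src tgt a' = arcHead src tgt a := by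
  by_contra hno
  push_neg at hno
  set v := arcHead src tgt a with hv
  have hnn : ∀ f : E, 0 ≤ c f * (ind (tgt f = v) - ind (src f = v)) := by
    intro f
    rcases lt_trichotomy (c f) 0 with h | h | h
    · have hne : tgt f ≠ v := by
        have := hno (f, false) (Or.inr ⟨rfl, h⟩)
        simpa [arcTail] using this
      rw [ind, if_neg hne]
      by_cases hs : src f = v <;> simp [ind, hs] <;> nlinarith
    · simp [h]
    · have hne : src f ≠ v := by
        have := hno (f, true) (Or.inl ⟨rfl, h⟩)
        simpa [arcTail] using this
      rw [show ind (src f = v) = 0 from by simp [ind, hne]]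
      by_cases hs : tgt f = v <;> simp [ind, hs] <;> nlinarith
  have hall := (Finset.sum_eq_zero_iff_of_nonneg (fun f _ => hnn f)).mp (hdiv v)
  obtain ⟨f1, b⟩ := a
  rcases ha with ⟨hb, hc⟩ | ⟨hb, hc⟩ <;> subst hb
  · have hvv : v = tgt f1 := by simp [hv, arcHead]
    have hne : src f1 ≠ v := by
      have := hno (f1, true) (Or.inl ⟨rfl, hc⟩)
      simpa [arcTail] using this
    have := hall f1 (Finset.mem_univ f1)
    rw [show ind (tgt f1 = v) = 1 from by simp [ind, hvv], show ind (src f1 = v) = 0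
      from by simp [ind, hne]] at this
    nlinarith
  · have hvv : v = src f1 := by simp [hv, arcHead]
    have hne : tgt f1 ≠ v := by
      have := hno (f1, false) (Or.inr ⟨rfl, hc⟩)
      simpa [arcTail] using this
    have := hall f1 (Finset.mem_univ f1)
    rw [show ind (src f1 = v) = 1 from by simp [ind, hvv], show ind (tgt f1 = v) = 0
      from by simp [ind, hne]] at this
    nlinarith

lemma exists_supp_cycle [Fintype V] [Fintype E] (c : E → ℤ)
    (hdiv : ∀ v, divg src tgt c v = 0) (f0 : E) (h0 : c f0 ≠ 0) :
    ∃ l : List (E × Bool), IsDirCycle src tgt l ∧ ∀ a ∈ l, Supp c a := by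
  have ha0 : ∃ a0, Supp c a0 := by
    rcases lt_trichotomy (c f0) 0 with h | h | h
    · exact ⟨(f0, false), Or.inr ⟨rfl, h⟩⟩
    · exact absurd h h0
    · exact ⟨(f0, true), Or.inl ⟨rfl, h⟩⟩
  obtain ⟨a0, ha0⟩ := ha0
  have H : ∀ p : {a // Supp c a}, ∃ q : {a // Supp c a},
      arcTail src tgt q.1 = arcHead src tgt p.1 := by
    intro p
    obtain ⟨a', h1, h2⟩ := exists_next src tgt c hdiv p.1 p.2
    exact ⟨⟨a', h1⟩, h2⟩
  choose nxt hnxt using H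
  set w : ℕ → {a // Supp c a} := fun n => nxt^[n] ⟨a0, ha0⟩ with hwdef
  have hw : ∀ n, arcTail src tgt ((w (n + 1)).1) = arcHead src tgt ((w n).1) := by
    intro n
    have : w (n + 1) = nxt (w n) := Function.iterate_succ_apply' nxt n _
    rw [this]
    exact hnxt _
  -- pigeonhole
  have hni : ∃ x y : ℕ, x ≠ y ∧ arcTail src tgt ((w x).1) = arcTail src tgt ((w y).1) := by
    obtain ⟨x, y, hxy, h⟩ := Finite.exists_ne_map_eq_of_infinite
      (fun n : ℕ => arcTail src tgt ((w n).1))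
    exact ⟨x, y, hxy, h⟩
  have hP : ∃ n, ∃ i, i < n ∧ arcTail src tgt ((w i).1) = arcTail src tgt ((w n).1) := by
    obtain ⟨x, y, hxy, h⟩ := hni
    rcases Nat.lt_or_ge x y with hlt | hge
    · exact ⟨y, x, hlt, h⟩
    · exact ⟨x, y, Nat.lt_of_le_of_ne hge (Ne.symm hxy), h.symm⟩
  set j0 := Nat.find hP with hj0def
  obtain ⟨i0, hi0lt, hi0eq⟩ := Nat.find_spec hP
  have hmin : ∀ m, m < j0 → ¬ ∃ i, i < m ∧
      arcTail src tgt ((w i).1) = arcTail src tgt ((w m).1) := fun m hm => Nat.find_min hP hm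
  set n := j0 - i0 with hn
  have hnpos : 0 < n := Nat.sub_pos_of_lt hi0lt
  set g : ℕ → E × Bool := fun k => (w (i0 + k)).1 with hg
  have hlen : ((List.range n).map g).length = n := by simp
  have hne : (List.range n).map g ≠ [] := by
    apply List.ne_nil_of_length_pos
    rw [hlen]; exact hnpos
  have hget : ∀ (i : ℕ) (h : i < ((List.range n).map g).length),
      ((List.range n).map g).get ⟨i, h⟩ = g i := by
    intro i h
    simp
  refine ⟨(List.range n).map g, ⟨hne, ?_, ?_, ?_⟩, ?_⟩
  · refine List.isChain_iff_getElem.mpr ?_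
    intro i h
    rw [hlen] at h
    simp only [List.getElem_map, List.getElem_range]
    show arcHead src tgt (w (i0 + i)).1 = arcTail src tgt (w (i0 + (i + 1))).1
    rw [show i0 + (i + 1) = (i0 + i) + 1 by ring]
    exact (hw (i0 + i)).symm
  · have h1 : ((List.range n).map g).getLast hne
        = ((List.range n).map g).get ⟨n - 1, by omega⟩ := by
      rw [List.getLast_eq_getElem]
      simp [hlen]
    have h2 : ((List.range n).map g).head hne = ((List.range n).map g).get ⟨0, by omega⟩ := by
      rw [List.head_eq_getElem_zero]
      simp
    rw [h1, h2, hget, hget]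
    show arcHead src tgt (w (i0 + (n - 1))).1 = arcTail src tgt (w (i0 + 0)).1
    have e1 : i0 + (n - 1) = j0 - 1 := by omega
    have e2 : (j0 - 1) + 1 = j0 := by omega
    rw [e1, Nat.add_zero]
    have := hw (j0 - 1)
    rw [e2] at this
    rw [← this, ← hi0eq]
  · have key : ∀ k1 k2, k1 < k2 → k2 < n →
        arcTail src tgt (g k1) ≠ arcTail src tgt (g k2) := by
      intro k1 k2 hlt hk2 heq
      exact hmin (i0 + k2) (by omega) ⟨i0 + k1, by omega, heq⟩
    rw [List.map_map]
    apply List.Nodup.map_on _ (List.nodup_range (n := n))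
    intro x hx y hy hxy
    rw [List.mem_range] at hx hy
    rcases lt_trichotomy x y with h | h | h
    · exact absurd hxy (key x y h hy)
    · exact h
    · exact absurd hxy.symm (key y x h hx)
  · intro a hmem
    obtain ⟨k, hk, rfl⟩ := List.mem_map.mp hmem
    exact (w _).2
end Aux4
section Aux5
set_option linter.unusedSectionVars false
open Classical
variable [DecidableEq E] (src tgt : E → V)

lemma compat_at (x : Four) (t : ℤ) :
    ((x = Four.zero → t = 0) ∧ (x = Four.forward → 0 ≤ t ∧ t ≤ 1) ∧
      (x = Four.backward → -1 ≤ t ∧ t ≤ 0))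
    ↔ (match x with
        | Four.zero => t = 0
        | Four.forward => 0 ≤ t ∧ t ≤ 1
        | Four.backward => -1 ≤ t ∧ t ≤ 0
        | Four.two => True) := by
  cases x <;> simp

lemma decompose [Fintype V] [Fintype E] (e : E) :
    ∀ (N : ℕ) (c : E → ℤ) (χ : E → Four), (∑ f, (c f).natAbs) ≤ N →
      (∀ v, divg src tgt c v = 0) → Compat c χ → c e = 0 →
      Relation.ReflTransGen (EStep src tgt e) χ (applyFlip c χ) := by
  intro N
  induction N with
  | zero =>
      intro c χ hsum _ _ _
      have hz : ∀ f, c f = 0 := by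
        intro f
        have h0 : ∑ f, (c f).natAbs = 0 := Nat.le_zero.mp hsum
        have := (Finset.sum_eq_zero_iff.mp h0) f (Finset.mem_univ f)
        omega
      have : applyFlip c χ = χ := by
        funext f; simp [applyFlip, hz f]
      rw [this]
  | succ N ih =>
      intro c χ hsum hdiv hcompat hce
      by_cases hz : ∀ f, c f = 0
      · have : applyFlip c χ = χ := by
          funext f; simp [applyFlip, hz f]
        rw [this]
      · push_neg at hz
        obtain ⟨f0, hf0⟩ := hz
        obtain ⟨l, hcyc, hsupp⟩ := exists_supp_cycle src tgt c hdiv f0 hf0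
        have hnd := hcyc.nodup src tgt
        have htrav : ∀ a ∈ l, allows (χ a.1) a.2 := by
          intro a ha
          rcases hsupp a ha with ⟨hb, hc⟩ | ⟨hb, hc⟩ <;>
            rcases hx : χ a.1 with _ | _ | _ | _ <;> rw [hb] <;> simp [allows]
          · exact absurd ((hcompat a.1).1 hx) (by omega)
          · have := (hcompat a.1).2.2 hx; omega
          · exact absurd ((hcompat a.1).1 hx) (by omega)
          · have := (hcompat a.1).2.1 hx; omega
        have havoid : ∀ a ∈ l, a.1 ≠ e := by
          intro a ha hae
          rcases hsupp a ha with ⟨_, hc⟩ | ⟨_, hc⟩ <;> rw [hae] at hc <;> omega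
        have hrc : revCyc χ l = applyFlip (cvec' l) χ :=
          revCyc_eq_applyFlip src tgt hcyc htrav
        set c1 : E → ℤ := fun f => c f - cvec' l f with hc1def
        have hmemtf : ∀ f : E, ¬ ((f, true) ∈ l ∧ (f, false) ∈ l) := by
          rintro f ⟨h1, h2⟩
          rcases hsupp _ h1 with ⟨_, hp⟩ | ⟨hb, _⟩
          · rcases hsupp _ h2 with ⟨hb2, _⟩ | ⟨_, hn⟩
            · simp at hb2
            · dsimp only at hp hn; omega
          · simp at hb
        have hval : ∀ f : E, ((f, true) ∈ l ∧ cvec' l f = 1 ∧ 0 < c f) ∨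
            ((f, false) ∈ l ∧ cvec' l f = -1 ∧ c f < 0) ∨
            ((f, true) ∉ l ∧ (f, false) ∉ l ∧ cvec' l f = 0) := by
          intro f
          by_cases h1 : (f, true) ∈ l
          · have h2 : (f, false) ∉ l := fun h2 => hmemtf f ⟨h1, h2⟩
            have := cvec'_forward hnd h2 (f := f)
            rw [if_pos h1] at this
            rcases hsupp _ h1 with ⟨_, hp⟩ | ⟨hb, _⟩
            · exact Or.inl ⟨h1, this, hp⟩
            · simp at hb
          · by_cases h2 : (f, false) ∈ l
            · have := cvec'_backward hnd h1 (f := f)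
              rw [if_pos h2] at this
              rcases hsupp _ h2 with ⟨hb, _⟩ | ⟨_, hn⟩
              · simp at hb
              · exact Or.inr (Or.inl ⟨h2, this, hn⟩)
            · exact Or.inr (Or.inr ⟨h1, h2, cvec'_of_not_mem h1 h2⟩)
        have hcompat1 : Compat c1 (revCyc χ l) := by
          intro f
          rw [hrc, compat_at]
          rcases hval f with ⟨h1, hv, hp⟩ | ⟨h2, hv, hn⟩ | ⟨h1, h2, hv⟩
          · have hx : χ f = Four.forward ∨ χ f = Four.two := by
              rcases hx : χ f with _ | _ | _ | _
              · exact absurd ((hcompat f).1 hx) (by omega)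
              · exact Or.inl rfl
              · have := (hcompat f).2.2 hx; omega
              · exact Or.inr rfl
            rcases hx with hx | hx
            · have hcf : c f = 1 := by have := (hcompat f).2.1 hx; omega
              have : applyFlip (cvec' l) χ f = Four.backward := by
                simp [applyFlip, hv, hx, flipFour]
              rw [this]
              show -1 ≤ c1 f ∧ c1 f ≤ 0
              simp only [hc1def, hv, hcf]; norm_num
            · have : applyFlip (cvec' l) χ f = Four.two := by
                simp [applyFlip, hv, hx, flipFour]
              rw [this]
              trivial
          · have hx : χ f = Four.backward ∨ χ f = Four.two := by
              rcases hx : χ f with _ | _ | _ | _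
              · exact absurd ((hcompat f).1 hx) (by omega)
              · have := (hcompat f).2.1 hx; omega
              · exact Or.inl rfl
              · exact Or.inr rfl
            rcases hx with hx | hx
            · have hcf : c f = -1 := by have := (hcompat f).2.2 hx; omega
              have : applyFlip (cvec' l) χ f = Four.forward := by
                simp [applyFlip, hv, hx, flipFour]
              rw [this]
              show 0 ≤ c1 f ∧ c1 f ≤ 1
              simp only [hc1def, hv, hcf]; norm_num
            · have : applyFlip (cvec' l) χ f = Four.two := by
                simp [applyFlip, hv, hx, flipFour]
              rw [this]
              trivial
          · have : applyFlip (cvec' l) χ f = χ f := by simp [applyFlip, hv]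
            rw [this]
            have hcc : c1 f = c f := by simp [hc1def, hv]
            rw [hcc, ← compat_at]
            exact hcompat f
        have hdiv1 : ∀ v, divg src tgt c1 v = 0 := by
          intro v
          rw [hc1def]
          rw [divg_sub, hdiv v, divg_cvec' src tgt hcyc v]; ring
        have hce1 : c1 e = 0 := by
          have h1 : (e, true) ∉ l := fun h => havoid _ h rfl
          have h2 : (e, false) ∉ l := fun h => havoid _ h rfl
          simp [hc1def, cvec'_of_not_mem h1 h2, hce]
        have hsum1 : (∑ f, (c1 f).natAbs) ≤ N := by
          have hle : ∀ f ∈ Finset.univ, (c1 f).natAbs ≤ (c f).natAbs := by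
            intro f _
            rcases hval f with ⟨_, hv, hp⟩ | ⟨_, hv, hn⟩ | ⟨_, _, hv⟩ <;>
              simp only [hc1def, hv] <;> omega
          obtain ⟨a0, ha0⟩ := List.exists_mem_of_ne_nil l hcyc.1
          have hstrict : (c1 a0.1).natAbs < (c a0.1).natAbs := by
            rcases hval a0.1 with ⟨_, hv, hp⟩ | ⟨_, hv, hn⟩ | ⟨h1, h2, _⟩
            · simp only [hc1def, hv]; omega
            · simp only [hc1def, hv]; omega
            · obtain ⟨f, b⟩ := a0
              cases b
              · exact absurd ha0 h2
              · exact absurd ha0 h1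
          have := Finset.sum_lt_sum hle ⟨a0.1, Finset.mem_univ _, hstrict⟩
          omega
        have hstep : EStep src tgt e χ (revCyc χ l) := ⟨l, hcyc, htrav, havoid, rfl⟩
        have hfinal : applyFlip c1 (revCyc χ l) = applyFlip c χ := by
          rw [hrc]
          have hcompat1' : Compat c1 (applyFlip (cvec' l) χ) := by
            have := hcompat1; rwa [hrc] at this
          have := applyFlip_trans (compat_cvec' src tgt hcyc htrav) hcompat1'
          rw [← this]
          congr 1
          funext f; simp [hc1def]
        have := ih c1 (revCyc χ l) hsum1 hdiv1 hcompat1 hce1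
        rw [hfinal] at this
        exact Relation.ReflTransGen.head hstep this
end Aux5
section Aux6
set_option linter.unusedSectionVars false
open Classical
variable [DecidableEq E] (src tgt : E → V)

lemma estep_flipE (e : E) {χ ψ : E → Four} (h : EStep src tgt e χ ψ) :
    EStep src tgt e (flipE e χ) (flipE e ψ) := by
  obtain ⟨l, hcyc, htrav, havoid, rfl⟩ := h
  have hupd : ∀ a ∈ l, flipE e χ a.1 = χ a.1 := by
    intro a ha
    exact Function.update_of_ne (havoid a ha) _ _
  refine ⟨l, hcyc, fun a ha => by rw [hupd a ha]; exact htrav a ha, havoid, ?_⟩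
  funext f
  have het : (e, true) ∉ l := fun h => havoid _ h rfl
  have hef : (e, false) ∉ l := fun h => havoid _ h rfl
  by_cases hfe : f = e
  · subst hfe
    have h1 : revCyc χ l f = χ f := by rw [revCyc, if_neg (by tauto)]
    have h2 : revCyc (flipE f χ) l f = flipE f χ f := by rw [revCyc, if_neg (by tauto)]
    rw [h2]
    show Function.update (revCyc χ l) f (flipFour (revCyc χ l f)) f = flipE f χ f
    rw [Function.update_self, h1]
    show flipFour (χ f) = Function.update χ f (flipFour (χ f)) f
    rw [Function.update_self]
  · have h2 : flipE e χ f = χ f := Function.update_of_ne hfe _ _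
    show Function.update (revCyc χ l) e (flipFour (revCyc χ l e)) f = revCyc (flipE e χ) l f
    rw [Function.update_of_ne hfe, revCyc, revCyc, h2]

lemma estep_cycleStep (e : E) {χ ψ : E → Four} (h : EStep src tgt e χ ψ) :
    CycleStep src tgt χ ψ := by
  obtain ⟨l, hcyc, htrav, _, rfl⟩ := h
  exact ⟨l, hcyc, htrav, rfl⟩

lemma rtg_estep_eqvGen (e : E) {χ ψ : E → Four}
    (h : Relation.ReflTransGen (EStep src tgt e) χ ψ) :
    Relation.EqvGen (CycleStep src tgt) χ ψ := by
  induction h with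
  | refl => exact Relation.EqvGen.refl _
  | tail hab hbc ih =>
      exact Relation.EqvGen.trans _ _ _ ih
        (Relation.EqvGen.rel _ _ (estep_cycleStep src tgt e hbc))

/-- Key lemma: flipping `e` preserves cycle equivalence among fourientations
agreeing at `e` (with `e` not 2-way). -/
lemma flip_eqv [Fintype V] [Fintype E] (e : E) {χ0 χ1 : E → Four}
    (h : Relation.EqvGen (CycleStep src tgt) χ0 χ1) (he : χ0 e = χ1 e)
    (h2 : χ0 e ≠ Four.two) :
    Relation.EqvGen (CycleStep src tgt) (flipE e χ0) (flipE e χ1) := by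
  obtain ⟨c, hd, hc, rfl⟩ := inv_of_eqvGen src tgt h
  have hce : c e = 0 := by
    by_contra hce
    have hval : applyFlip c χ0 e = flipFour (χ0 e) := by simp [applyFlip, hce]
    rw [hval] at he
    rcases hx : χ0 e with _ | _ | _ | _
    · exact hce ((hc e).1 hx)
    · rw [hx] at he; simp [flipFour] at he
    · rw [hx] at he; simp [flipFour] at he
    · exact h2 hx
  have hdec := decompose src tgt e (∑ f, (c f).natAbs) c χ0 le_rfl hd hc hce
  have hlift : Relation.ReflTransGen (EStep src tgt e) (flipE e χ0)
      (flipE e (applyFlip c χ0)) := by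
    refine Relation.ReflTransGen.lift (flipE e) ?_ _ _ hdec
    intro a b hab
    exact estep_flipE src tgt e hab
  exact rtg_estep_eqvGen src tgt e hlift
end Aux6
section Aux7
set_option linter.unusedSectionVars false
open Classical
variable [DecidableEq E] (src tgt : E → V) (A B : Set (V × V))

lemma reach_walk (φ : E → Four) :
    ∀ (m : List (E × Bool)) (x z : E × Bool),
      m.Chain' (fun a b => arcHead src tgt a = arcTail src tgt b) →
      m.head? = some x → m.getLast? = some z → (∀ a ∈ m, allows (φ a.1) a.2) →
      reach src tgt A B φ (arcTail src tgt x) (arcHead src tgt z)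
  | [], x, z => by intro _ h; simp at h
  | [b], x, z => by
      intro _ hx hz htrav
      have hx' : b = x := by simpa using hx
      have hz' : b = z := by simpa using hz
      subst hx'; subst hz'
      exact Relation.ReflTransGen.single (Or.inl ⟨b, htrav b (by simp), rfl, rfl⟩)
  | b :: c :: t, x, z => by
      intro hc hx hz htrav
      have hbc := (List.isChain_cons_cons.mp hc).1
      have ht := (List.isChain_cons_cons.mp hc).2
      have hx' : b = x := by simpa using hx
      have hz' : (c :: t).getLast? = some z := by simpa [List.getLast?_cons_cons] using hz
      subst hx'
      have IH := reach_walk φ (c :: t) c z ht rfl hz'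
        (fun a ha => htrav a (List.mem_cons_of_mem _ ha))
      have step : reach src tgt A B φ (arcTail src tgt b) (arcHead src tgt b) :=
        Relation.ReflTransGen.single (Or.inl ⟨b, htrav b (by simp), rfl, rfl⟩)
      rw [hbc] at step
      exact Relation.ReflTransGen.trans step IH

lemma reach_head_tail (φ : E → Four) {l : List (E × Bool)} (hcyc : IsDirCycle src tgt l)
    (htrav : ∀ a ∈ l, allows (φ a.1) a.2) {a : E × Bool} (hmem : a ∈ l) :
    reach src tgt A B φ (arcHead src tgt a) (arcTail src tgt a) := by
  obtain ⟨l1, l2, rfl⟩ := List.append_of_mem hmem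
  obtain ⟨hne, hchain, hclose, hnd⟩ := hcyc
  have hclose' : ∀ u w, (l1 ++ a :: l2).getLast? = some u → (l1 ++ a :: l2).head? = some w →
      arcHead src tgt u = arcTail src tgt w := by
    intro u w hu hw
    rw [List.getLast?_eq_getLast_of_ne_nil hne] at hu
    rw [List.head?_eq_head hne] at hw
    cases hu; cases hw
    exact hclose
  replace hchain := List.isChain_append.mp hchain
  obtain ⟨hc1, hc2, hj⟩ := hchain
  have hc2' := List.isChain_cons.mp hc2
  have hj' : ∀ u, l1.getLast? = some u → arcHead src tgt u = arcTail src tgt a :=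
    fun u hu => hj u (Option.mem_def.mpr hu) a (Option.mem_def.mpr rfl)
  have hjy' : ∀ y', l2.head? = some y' → arcHead src tgt a = arcTail src tgt y' :=
    fun y' hy => hc2'.1 y' (Option.mem_def.mpr hy)
  have htrav1 : ∀ b ∈ l1, allows (φ b.1) b.2 := fun b hb =>
    htrav b (List.mem_append_left _ hb)
  have htrav2 : ∀ b ∈ l2, allows (φ b.1) b.2 := fun b hb =>
    htrav b (List.mem_append_right _ (List.mem_cons_of_mem _ hb))
  rcases hl2 : l2 with _ | ⟨y, l2'⟩ <;> rcases hl1 : l1 with _ | ⟨x, l1'⟩ <;> subst hl1 hl2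
  · -- l1 = [], l2 = []
    have heq : arcHead src tgt a = arcTail src tgt a := hclose' a a (by simp) (by simp)
    rw [heq]
    exact Relation.ReflTransGen.refl
  · -- l1 = x :: l1', l2 = []
    have hgl1 : (x :: l1').getLast? = some ((x :: l1').getLast (by simp)) :=
      List.getLast?_eq_getLast_of_ne_nil (by simp)
    have hclose1 : arcHead src tgt a = arcTail src tgt x :=
      hclose' a x (by rw [List.getLast?_append_cons]; simp) (by rfl)
    have hj1 := hj' _ hgl1
    have r1 := reach_walk src tgt A B φ (x :: l1') x ((x :: l1').getLast (by simp)) hc1 rfl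
      hgl1 htrav1
    rw [hj1] at r1
    rw [← hclose1] at r1
    exact r1
  · -- l1 = [], l2 = y :: l2'
    have hgl2 : (y :: l2').getLast? = some ((y :: l2').getLast (by simp)) :=
      List.getLast?_eq_getLast_of_ne_nil (by simp)
    have hjy := hjy' y rfl
    have hclose2 : arcHead src tgt ((y :: l2').getLast (by simp)) = arcTail src tgt a := by
      refine hclose' _ a ?_ (by simp)
      rw [show ([] ++ a :: y :: l2' : List (E × Bool)) = a :: y :: l2' by simp,
        List.getLast?_cons_cons]
      exact hgl2
    have r2 := reach_walk src tgt A B φ (y :: l2') y ((y :: l2').getLast (by simp)) hc2'.2 rfl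
      hgl2 htrav2
    rw [← hjy] at r2
    rw [hclose2] at r2
    exact r2
  · -- both nonempty
    have hgl1 : (x :: l1').getLast? = some ((x :: l1').getLast (by simp)) :=
      List.getLast?_eq_getLast_of_ne_nil (by simp)
    have hgl2 : (y :: l2').getLast? = some ((y :: l2').getLast (by simp)) :=
      List.getLast?_eq_getLast_of_ne_nil (by simp)
    have hjy := hjy' y rfl
    have hj1 := hj' _ hgl1
    have hclose2 : arcHead src tgt ((y :: l2').getLast (by simp)) = arcTail src tgt x := by
      refine hclose' _ x ?_ (by simp)
      rw [List.getLast?_append_cons, List.getLast?_cons_cons]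
      exact hgl2
    have r2 := reach_walk src tgt A B φ (y :: l2') y ((y :: l2').getLast (by simp)) hc2'.2 rfl
      hgl2 htrav2
    have r1 := reach_walk src tgt A B φ (x :: l1') x ((x :: l1').getLast (by simp)) hc1 rfl
      hgl1 htrav1
    rw [← hjy] at r2
    rw [hclose2] at r2
    rw [hj1] at r1
    exact Relation.ReflTransGen.trans r2 r1

/-- Values only flip along cycle equivalence. -/
lemma eqv_val {φ ψ : E → Four} (h : Relation.EqvGen (CycleStep src tgt) φ ψ) (f : E) :
    ψ f = φ f ∨ ψ f = flipFour (φ f) := by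
  induction h with
  | rel a b hab =>
      obtain ⟨l, hcyc, htrav, rfl⟩ := hab
      rw [revCyc]
      split
      · exact Or.inr rfl
      · exact Or.inl rfl
  | refl a => exact Or.inl rfl
  | symm a b hab ih =>
      rcases ih with h | h
      · exact Or.inl h.symm
      · right; rw [h, flipFour_flipFour]
  | trans a b c hab hbc ih1 ih2 =>
      rcases ih1 with h1 | h1 <;> rcases ih2 with h2 | h2
      · exact Or.inl (h2.trans h1)
      · exact Or.inr (by rw [h2, h1])
      · exact Or.inr (by rw [h2, h1])
      · left; rw [h2, h1, flipFour_flipFour]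

lemma mem_cycCls_self (φ : E → Four) : φ ∈ cycCls src tgt φ :=
  Relation.EqvGen.refl φ

lemma cycCls_eq_of_mem {φ ψ : E → Four} (h : ψ ∈ cycCls src tgt φ) :
    cycCls src tgt φ = cycCls src tgt ψ := by
  have hψ : Relation.EqvGen (CycleStep src tgt) φ ψ := h
  ext χ
  constructor
  · intro hχ
    exact Relation.EqvGen.trans _ _ _ (Relation.EqvGen.symm _ _ hψ) hχ
  · intro hχ
    exact Relation.EqvGen.trans _ _ _ hψ hχ

/-- In an everywhere-`e`-acyclic class, the orientation of `e` is constant. -/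
lemma eq_at_e_of_acyclic (e : E) (φ : E → Four)
    (hac : ∀ ψ, Relation.EqvGen (CycleStep src tgt) φ ψ → EAcyclicIn src tgt A B e ψ) :
    ∀ ψ, Relation.EqvGen (CycleStep src tgt) φ ψ → ψ e = φ e := by
  have key : ∀ a b, Relation.EqvGen (CycleStep src tgt) a b →
      Relation.EqvGen (CycleStep src tgt) φ a → a e = b e := by
    intro a b h
    induction h with
    | rel a b hab =>
        intro hφa
        obtain ⟨l, hcyc, htrav, rfl⟩ := hab
        by_cases hm : (e, true) ∈ l ∨ (e, false) ∈ l
        · exfalso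
          rcases hac a hφa with ⟨hae, hnr⟩ | ⟨hae, hnr⟩
          · have hmt : (e, true) ∈ l := by
              rcases hm with hm | hm
              · exact hm
              · exact absurd hm (not_mem_false_of_forward hae htrav)
            have := reach_head_tail src tgt A B a hcyc htrav hmt
            apply hnr
            simpa [arcHead, arcTail] using this
          · have hmf : (e, false) ∈ l := by
              rcases hm with hm | hm
              · exact absurd hm (not_mem_true_of_backward hae htrav)
              · exact hm
            have := reach_head_tail src tgt A B a hcyc htrav hmf
            apply hnr
            simpa [arcHead, arcTail] using this
        · rw [revCyc, if_neg hm]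
    | refl a => intro _; rfl
    | symm a b hab ih =>
        intro hφb
        have hφa : Relation.EqvGen (CycleStep src tgt) φ a :=
          Relation.EqvGen.trans _ _ _ hφb (Relation.EqvGen.symm _ _ hab)
        exact (ih hφa).symm
    | trans a b c hab hbc ih1 ih2 =>
        intro hφa
        have hφb := Relation.EqvGen.trans _ _ _ hφa hab
        rw [ih1 hφa, ih2 hφb]
  intro ψ h
  exact (key φ ψ h (Relation.EqvGen.refl φ)).symm
end Aux7
section Aux8
set_option linter.unusedSectionVars false
open Classical
variable [DecidableEq E] (src tgt : E → V)

lemma oneWayFour_ne_two (b : Bool) : oneWayFour b ≠ Four.two := by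
  cases b <;> simp [oneWayFour]

lemma oneway_of_not_solid {φ : E → Four} {S : Set E} {e : E} (hs : solidSet φ = S)
    (he : e ∉ S) : φ e = Four.forward ∨ φ e = Four.backward := by
  have hne : e ∉ solidSet φ := by rw [hs]; exact he
  rcases h : φ e with _ | _ | _ | _
  · exact absurd (Or.inl h : IsSolid (φ e)) hne
  · exact Or.inl rfl
  · exact Or.inr rfl
  · exact absurd (Or.inr h : IsSolid (φ e)) hne
end Aux8
/-- Let `𝒱` be the set of `(A,B)`-valid cycle classes with solid edge set
`S` and let `e ∉ S`. Every `𝒱`-block is `e`-adjacent to at most one other `𝒱`-block;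
consequently, in the graph on `𝒱` whose edges join `e`-adjacent classes, every `e`-acyclic
class has degree at most 1 and every `e`-cyclic class has degree at most 2. -/
theorem statement19 {V E : Type*} [Fintype V] [Fintype E] [DecidableEq E] (src tgt : E → V)
    (A B : Set (V × V)) (S : Set E) (e : E) (he : e ∉ S) :
    (∀ X, IsVBlock src tgt A B S e X →
      {Y | IsVBlock src tgt A B S e Y ∧ Y ≠ X ∧ EAdj e X Y}.ncard ≤ 1) ∧
    (∀ C, IsVClass src tgt A B S C → (∀ ψ ∈ C, EAcyclicIn src tgt A B e ψ) →
      {C' | IsVClass src tgt A B S C' ∧ EAdj e C C'}.ncard ≤ 1) ∧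
    (∀ C, IsVClass src tgt A B S C → (∀ ψ ∈ C, ECyclicIn src tgt A B e ψ) →
      {C' | IsVClass src tgt A B S C' ∧ EAdj e C C'}.ncard ≤ 2) := by
  classical
  refine ⟨?_, ?_, ?_⟩
  · -- blocks
    rintro X ⟨φ, b, hφ, rfl, hXne⟩
    obtain ⟨ψX, hψXmem, hψXe⟩ := hXne
    have hsub : {Y | IsVBlock src tgt A B S e Y ∧
        Y ≠ {ψ ∈ cycCls src tgt φ | ψ e = oneWayFour b} ∧
        EAdj e {ψ ∈ cycCls src tgt φ | ψ e = oneWayFour b} Y}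
        ⊆ {({χ ∈ cycCls src tgt (flipE e ψX) | χ e = flipFour (oneWayFour b)} :
            Set (E → Four))} := by
      rintro Y ⟨⟨φ'', b'', hφ'', rfl, hYne⟩, hYneX, ψ, hψX', hψ'Y⟩
      obtain ⟨hψmem, hψe⟩ := hψX'
      have hflip : flipE e ψ ∈ {χ ∈ cycCls src tgt φ'' | χ e = oneWayFour b''} := hψ'Y
      have heqv : Relation.EqvGen (CycleStep src tgt) ψ ψX :=
        Relation.EqvGen.trans _ _ _ (Relation.EqvGen.symm _ _ hψmem) hψXmem
      have hM := flip_eqv src tgt e heqv (by rw [hψe, hψXe])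
        (by rw [hψe]; exact oneWayFour_ne_two b)
      have h1 : cycCls src tgt φ'' = cycCls src tgt (flipE e ψ) :=
        cycCls_eq_of_mem src tgt hflip.1
      have h2 : cycCls src tgt (flipE e ψ) = cycCls src tgt (flipE e ψX) :=
        cycCls_eq_of_mem src tgt hM
      have h3 : oneWayFour b'' = flipFour (oneWayFour b) := by
        have hv := hflip.2
        have : flipE e ψ e = flipFour (ψ e) := Function.update_self _ _ _
        rw [this, hψe] at hv
        exact hv.symm
      rw [Set.mem_singleton_iff, h3, h1, h2]
    refine le_trans (Set.ncard_le_ncard hsub (Set.finite_singleton _)) ?_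
    rw [Set.ncard_singleton]
  · -- e-acyclic classes
    rintro C ⟨φ, hφ, rfl⟩ hac
    have hφe := oneway_of_not_solid hφ.2.1 he
    have hconst := eq_at_e_of_acyclic src tgt A B e φ (fun ψ hψ => hac ψ hψ)
    have hsub : {C' | IsVClass src tgt A B S C' ∧ EAdj e (cycCls src tgt φ) C'}
        ⊆ {cycCls src tgt (flipE e φ)} := by
      rintro C' ⟨⟨φ'', hφ'', rfl⟩, ψ, hψmem, hψ'mem⟩
      have hψ'mem' : flipE e ψ ∈ cycCls src tgt φ'' := hψ'mem
      have hψe := hconst ψ hψmem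
      have hM := flip_eqv src tgt e hψmem hψe.symm
        (by rcases hφe with h | h <;> rw [h] <;> simp)
      rw [Set.mem_singleton_iff, cycCls_eq_of_mem src tgt hψ'mem',
        (cycCls_eq_of_mem src tgt hM).symm]
    refine le_trans (Set.ncard_le_ncard hsub (Set.finite_singleton _)) ?_
    rw [Set.ncard_singleton]
  · -- e-cyclic classes
    rintro C ⟨φ, hφ, rfl⟩ _
    have hφe := oneway_of_not_solid hφ.2.1 he
    set Z : Bool → Set (E → Four) := fun b =>
      if h : ∃ ψ, Relation.EqvGen (CycleStep src tgt) φ ψ ∧ ψ e = oneWayFour b then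
        cycCls src tgt (flipE e h.choose) else ∅ with hZ
    have hsub : {C' | IsVClass src tgt A B S C' ∧ EAdj e (cycCls src tgt φ) C'}
        ⊆ {Z true, Z false} := by
      rintro C' ⟨⟨φ'', hφ'', rfl⟩, ψ, hψmem, hψ'mem⟩
      have hψ'mem' : flipE e ψ ∈ cycCls src tgt φ'' := hψ'mem
      have hψe : ∃ b : Bool, ψ e = oneWayFour b := by
        rcases eqv_val src tgt hψmem e with h | h <;> rcases hφe with h' | h'
        · exact ⟨true, by rw [h, h']; rfl⟩
        · exact ⟨false, by rw [h, h']; rfl⟩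
        · exact ⟨false, by rw [h, h']; rfl⟩
        · exact ⟨true, by rw [h, h']; rfl⟩
      obtain ⟨b, hb⟩ := hψe
      have hEx : ∃ ψ', Relation.EqvGen (CycleStep src tgt) φ ψ' ∧ ψ' e = oneWayFour b :=
        ⟨ψ, hψmem, hb⟩
      have hch := hEx.choose_spec
      have hM := flip_eqv src tgt e
        (Relation.EqvGen.trans _ _ _ (Relation.EqvGen.symm _ _ hψmem) hch.1)
        (by rw [hb, hch.2]) (by rw [hb]; exact oneWayFour_ne_two b)
      have hCZ : cycCls src tgt φ'' = Z b := by
        rw [hZ]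
        simp only
        rw [dif_pos hEx, cycCls_eq_of_mem src tgt hψ'mem', cycCls_eq_of_mem src tgt hM]
      rw [hCZ]
      cases b
      · exact Or.inr rfl
      · exact Or.inl rfl
    refine le_trans (Set.ncard_le_ncard hsub ((Set.finite_singleton (Z false)).insert _)) ?_
    refine le_trans (Set.ncard_insert_le _ _) ?_
    rw [Set.ncard_singleton]

end SubgraphsVsOrientations
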